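/- (Mixture-data version of Theorem 2 used in Theorem 3) Let L ≥ 1, let α₁, …, α_L ∈ [0,1] with Σ_{l=1}^L α_l = 1, let μ₁, …, μ_L be probability measures on ℝ^d, let δ ∈ [0,1], and for each l let μ'_l = μ_l ∗ ((1−δ)·δ₀ + δ·g_l) for arbitrary probability measures g₁, …, g_L on ℝ^d, where δ₀ is the Dirac point mass at the origin and ∗ denotes convolution of measures. Then JSD(Σ_{l=1}^L α_l μ_l, Σ_{l=1}^L α_l μ'_l) ≤ δ. -/

import Mathlib

open MeasureTheory
open scoped ENNReal

open Classical in
/-- Kullback–Leibler divergence, valued in the extended reals: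
`KL(P‖Q) = ∫ log (dP/dQ) dP` if `P ≪ Q` and the log-likelihood ratio is
`P`-integrable, and `∞` otherwise. -/
noncomputable def klDiv {Ω : Type*} [MeasurableSpace Ω] (P Q : Measure Ω) : EReal :=
  if P ≪ Q ∧ Integrable (llr P Q) P then ((∫ x, llr P Q x ∂P : ℝ) : EReal) else ⊤

/-- Jensen–Shannon divergence:
`JSD(P,Q) = (1/2) KL(P‖M) + (1/2) KL(Q‖M)` with `M = (1/2)(P + Q)`. -/
noncomputable def jsDiv {Ω : Type*} [MeasurableSpace Ω] (P Q : Measure Ω) : EReal :=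
  (1 / 2 : EReal) * klDiv P ((2 : ℝ≥0∞)⁻¹ • (P + Q))
    + (1 / 2 : EReal) * klDiv Q ((2 : ℝ≥0∞)⁻¹ • (P + Q))

lemma prod_smul_right' {α β : Type*} [MeasurableSpace α] [MeasurableSpace β]
    (μ : Measure α) (ν : Measure β) [SigmaFinite μ] [IsFiniteMeasure ν] {c : ℝ≥0∞} (hc : c ≠ ⊤) :
    μ.prod (c • ν) = c • μ.prod ν := by
  haveI : IsFiniteMeasure (c • ν) := by
    constructor
    simp only [Measure.smul_apply, smul_eq_mul]
    exact ENNReal.mul_lt_top hc.lt_top (measure_lt_top ν _)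
  refine Measure.prod_eq (μ := μ) (ν := c • ν) (μν := c • μ.prod ν) fun s t hs ht => ?_
  rw [Measure.smul_apply, Measure.prod_prod, Measure.smul_apply, smul_eq_mul, smul_eq_mul]
  ring

lemma conv_smul_right' {G : Type*} [AddMonoid G] [MeasurableSpace G] [MeasurableAdd₂ G]
    (μ ν : Measure G) [SigmaFinite μ] [IsFiniteMeasure ν] {c : ℝ≥0∞} (hc : c ≠ ⊤) :
    μ.conv (c • ν) = c • μ.conv ν := by
  unfold Measure.conv
  rw [prod_smul_right' μ ν hc, Measure.map_smul]

lemma ptwise (p q r δ : ℝ) (hp : 0 ≤ p) (hq : 0 ≤ q) (hr : 0 ≤ r) (hδ : 0 ≤ δ)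
    (hsum : p + q = 2) (hmix : q = (1 - δ) * p + δ * r) :
    p * Real.log p / 2 + q * Real.log q / 2 ≤ δ * (p + r) / 2 := by
  have key : ∀ x : ℝ, 0 ≤ x → x * Real.log x ≤ x * (x - 1) := by
    intro x hx
    rcases eq_or_lt_of_le hx with h | h
    · simp [← h]
    · exact mul_le_mul_of_nonneg_left (Real.log_le_sub_one_of_pos h) (le_of_lt h)
  have h1 := key p hp
  have h2 := key q hq
  have ht : p - 1 = δ * (p - r) / 2 := by nlinarith
  have habs : (p - 1)^2 ≤ δ * (p + r) / 2 := by
    have h3 : |p - 1| ≤ 1 := by rw [abs_le]; constructor <;> nlinarith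
    have h4 : |p - 1| ≤ δ * (p + r) / 2 := by
      rw [abs_le]; constructor <;> nlinarith [mul_nonneg hδ hp, mul_nonneg hδ hr]
    calc (p-1)^2 = |p-1| * |p-1| := by rw [← abs_mul, ← sq, abs_of_nonneg (sq_nonneg _)]
    _ ≤ 1 * (δ * (p + r) / 2) := mul_le_mul h3 h4 (abs_nonneg _) zero_le_one
    _ = δ * (p + r) / 2 := one_mul _
  nlinarith

lemma mul_log_abs_le (x : ℝ) (h0 : 0 ≤ x) (h2 : x ≤ 2) : |x * Real.log x| ≤ 2 := by
  rcases eq_or_lt_of_le h0 with h | h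
  · simp [← h]
  rw [abs_le]
  constructor
  · have hlog : 1 - 1/x ≤ Real.log x := by
      have := Real.log_le_sub_one_of_pos (show (0:ℝ) < 1/x by positivity)
      rw [Real.log_div one_ne_zero (ne_of_gt h), Real.log_one] at this
      linarith
    have hx1 : x * (1/x) = 1 := by field_simp
    nlinarith [mul_le_mul_of_nonneg_left hlog (le_of_lt h)]
  · have hlog := Real.log_le_sub_one_of_pos h
    nlinarith

lemma jsDiv_mix_le {Ω : Type*} [MeasurableSpace Ω] (P R : Measure Ω)
    [IsProbabilityMeasure P] [IsProbabilityMeasure R] {δ : ℝ} (hδ0 : 0 ≤ δ) (hδ1 : δ ≤ 1) :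
    jsDiv P (ENNReal.ofReal (1 - δ) • P + ENNReal.ofReal δ • R) ≤ (δ : EReal) := by
  set a : ℝ≥0∞ := ENNReal.ofReal (1 - δ) with ha_def
  set b : ℝ≥0∞ := ENNReal.ofReal δ with hb_def
  have ha_top : a ≠ ⊤ := ENNReal.ofReal_ne_top
  have hb_top : b ≠ ⊤ := ENNReal.ofReal_ne_top
  have hab : a + b = 1 := by
    rw [ha_def, hb_def, ← ENNReal.ofReal_add (by linarith) hδ0]
    norm_num
  set Q : Measure Ω := a • P + b • R with hQ_def
  haveI : IsFiniteMeasure Q := by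
    constructor
    simp only [hQ_def, Measure.add_apply, Measure.smul_apply, smul_eq_mul, measure_univ, mul_one]
    rw [hab]; exact ENNReal.one_lt_top
  haveI : IsProbabilityMeasure Q := by
    constructor
    simp only [hQ_def, Measure.add_apply, Measure.smul_apply, smul_eq_mul, measure_univ, mul_one]
    exact hab
  set M : Measure Ω := (2 : ℝ≥0∞)⁻¹ • (P + Q) with hM_def
  haveI : IsProbabilityMeasure M := by
    constructor
    simp only [hM_def, Measure.smul_apply, Measure.add_apply, measure_univ, smul_eq_mul]
    rw [one_add_one_eq_two, ENNReal.inv_mul_cancel (by norm_num) (by norm_num)]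
  have hPQ2M : P + Q = (2 : ℝ≥0∞) • M := by
    rw [hM_def, smul_smul, ENNReal.mul_inv_cancel (by norm_num) (by norm_num), one_smul]
  have h2M : ((2 : ℝ≥0∞) • M) ≪ M := Measure.smul_absolutelyContinuous
  have hPM : P ≪ M := (Measure.absolutelyContinuous_of_le
      (Measure.le_add_right le_rfl : P ≤ P + Q)).trans (hPQ2M ▸ h2M)
  have hQM : Q ≪ M := (Measure.absolutelyContinuous_of_le
      (Measure.le_add_left le_rfl : Q ≤ P + Q)).trans (hPQ2M ▸ h2M)
  -- densities
  set p : Ω → ℝ≥0∞ := P.rnDeriv M with hp_def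
  set q : Ω → ℝ≥0∞ := Q.rnDeriv M with hq_def
  set r : Ω → ℝ≥0∞ := R.rnDeriv M with hr_def
  have hpq : p + q =ᵐ[M] fun _ => (2 : ℝ≥0∞) := by
    have h1 : (P + Q).rnDeriv M =ᵐ[M] p + q := Measure.rnDeriv_add' P Q M
    have h2 : ((2 : ℝ≥0∞) • M).rnDeriv M =ᵐ[M] fun _ => (2 : ℝ≥0∞) := by
      refine (Measure.rnDeriv_smul_left_of_ne_top' M M (by norm_num)).trans ?_
      filter_upwards [Measure.rnDeriv_self M] with x hx
      simp [hx]
    exact h1.symm.trans (hPQ2M ▸ h2)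
  haveI hfinaP : IsFiniteMeasure (a • P) := by
    constructor
    simp only [Measure.smul_apply, smul_eq_mul, measure_univ, mul_one]
    exact ha_top.lt_top
  haveI hfinbR : IsFiniteMeasure (b • R) := by
    constructor
    simp only [Measure.smul_apply, smul_eq_mul, measure_univ, mul_one]
    exact hb_top.lt_top
  have hqmix : q =ᵐ[M] fun x => a * p x + b * r x := by
    have h1 : Q.rnDeriv M =ᵐ[M] (a • P).rnDeriv M + (b • R).rnDeriv M := by
      rw [hQ_def]; exact Measure.rnDeriv_add' _ _ M
    have h2 : (a • P).rnDeriv M =ᵐ[M] a • p := Measure.rnDeriv_smul_left_of_ne_top' P M ha_top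
    have h3 : (b • R).rnDeriv M =ᵐ[M] b • r := Measure.rnDeriv_smul_left_of_ne_top' R M hb_top
    filter_upwards [h1, h2, h3] with x h1 h2 h3
    simp only [Pi.add_apply] at h1
    rw [hq_def, h1, h2, h3]; rfl
  have hp_top := Measure.rnDeriv_lt_top P M
  have hq_top := Measure.rnDeriv_lt_top Q M
  have hr_top := Measure.rnDeriv_lt_top R M
  -- real-valued a.e. facts
  have hreal : ∀ᵐ x ∂M, (p x).toReal + (q x).toReal = 2 ∧
      (q x).toReal = (1 - δ) * (p x).toReal + δ * (r x).toReal := by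
    filter_upwards [hpq, hqmix, hp_top, hq_top, hr_top] with x h1 h2 h3 h4 h5
    constructor
    · have : p x + q x = 2 := h1
      rw [← ENNReal.toReal_add h3.ne h4.ne, this]
      norm_num
    · rw [h2, ENNReal.toReal_add (ENNReal.mul_ne_top ha_top h3.ne)
        (ENNReal.mul_ne_top hb_top h5.ne), ENNReal.toReal_mul, ENNReal.toReal_mul,
        ha_def, hb_def, ENNReal.toReal_ofReal (by linarith), ENNReal.toReal_ofReal hδ0]
  -- the key pointwise bound
  have hbound : ∀ᵐ x ∂M,
      (p x).toReal * Real.log (p x).toReal / 2 + (q x).toReal * Real.log (q x).toReal / 2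
        ≤ δ * ((p x).toReal + (r x).toReal) / 2 := by
    filter_upwards [hreal] with x hx
    exact ptwise _ _ _ _ ENNReal.toReal_nonneg ENNReal.toReal_nonneg ENNReal.toReal_nonneg
      hδ0 hx.1 hx.2
  -- integrability of x ↦ p̃ log p̃ and q̃ log q̃
  have hmeasp : Measurable fun x => (p x).toReal * Real.log (p x).toReal :=
    (Measure.measurable_rnDeriv P M).ennreal_toReal.mul
      (Real.measurable_log.comp (Measure.measurable_rnDeriv P M).ennreal_toReal)
  have hmeasq : Measurable fun x => (q x).toReal * Real.log (q x).toReal :=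
    (Measure.measurable_rnDeriv Q M).ennreal_toReal.mul
      (Real.measurable_log.comp (Measure.measurable_rnDeriv Q M).ennreal_toReal)
  have hple : ∀ᵐ x ∂M, (p x).toReal ≤ 2 ∧ (q x).toReal ≤ 2 := by
    filter_upwards [hreal] with x hx
    constructor <;> nlinarith [ENNReal.toReal_nonneg (a := p x), ENNReal.toReal_nonneg (a := q x),
      hx.1]
  have hintp : Integrable (fun x => (p x).toReal * Real.log (p x).toReal) M := by
    refine Integrable.mono' (integrable_const (2 : ℝ)) hmeasp.aestronglyMeasurable ?_
    filter_upwards [hple] with x hx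
    rw [Real.norm_eq_abs]
    exact mul_log_abs_le _ ENNReal.toReal_nonneg hx.1
  have hintq : Integrable (fun x => (q x).toReal * Real.log (q x).toReal) M := by
    refine Integrable.mono' (integrable_const (2 : ℝ)) hmeasq.aestronglyMeasurable ?_
    filter_upwards [hple] with x hx
    rw [Real.norm_eq_abs]
    exact mul_log_abs_le _ ENNReal.toReal_nonneg hx.2
  -- llr integrability
  have hllrP : Integrable (llr P M) P := by
    rw [← integrable_rnDeriv_smul_iff hPM]
    simpa only [llr_def, smul_eq_mul] using hintp
  have hllrQ : Integrable (llr Q M) Q := by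
    rw [← integrable_rnDeriv_smul_iff hQM]
    simpa only [llr_def, smul_eq_mul] using hintq
  -- integral identities
  have hIP : ∫ x, llr P M x ∂P = ∫ x, (p x).toReal * Real.log (p x).toReal ∂M := by
    rw [← integral_rnDeriv_smul hPM]
    simp only [llr_def, smul_eq_mul]
    rfl
  have hIQ : ∫ x, llr Q M x ∂Q = ∫ x, (q x).toReal * Real.log (q x).toReal ∂M := by
    rw [← integral_rnDeriv_smul hQM]
    simp only [llr_def, smul_eq_mul]
    rfl
  -- integral of r̃ is at most 1, integral of p̃ is 1
  have hIr : ∫ x, (r x).toReal ∂M ≤ 1 := by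
    rw [integral_toReal (Measure.measurable_rnDeriv R M).aemeasurable hr_top]
    calc (∫⁻ x, r x ∂M).toReal ≤ (R Set.univ).toReal :=
      ENNReal.toReal_mono (measure_ne_top R _) (Measure.lintegral_rnDeriv_le)
    _ = 1 := by simp
  have hIp : ∫ x, (p x).toReal ∂M = 1 := by
    rw [Measure.integral_toReal_rnDeriv hPM]; simp
  -- the real inequality
  have hmain : (∫ x, llr P M x ∂P) / 2 + (∫ x, llr Q M x ∂Q) / 2 ≤ δ := by
    rw [hIP, hIQ]
    have h1 : (∫ x, (p x).toReal * Real.log (p x).toReal ∂M) / 2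
        + (∫ x, (q x).toReal * Real.log (q x).toReal ∂M) / 2
        = ∫ x, ((p x).toReal * Real.log (p x).toReal / 2
            + (q x).toReal * Real.log (q x).toReal / 2) ∂M := by
      rw [integral_add (hintp.div_const 2) (hintq.div_const 2), integral_div, integral_div]
    rw [h1]
    have h2 : ∫ x, ((p x).toReal * Real.log (p x).toReal / 2
          + (q x).toReal * Real.log (q x).toReal / 2) ∂M
        ≤ ∫ x, δ * ((p x).toReal + (r x).toReal) / 2 ∂M := by
      refine integral_mono_ae ((hintp.div_const 2).add (hintq.div_const 2)) ?_ hbound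
      exact ((Measure.integrable_toReal_rnDeriv.add Measure.integrable_toReal_rnDeriv).const_mul
        δ).div_const 2
    refine h2.trans ?_
    have h3 : ∫ x, δ * ((p x).toReal + (r x).toReal) / 2 ∂M
        = δ * ((∫ x, (p x).toReal ∂M) + ∫ x, (r x).toReal ∂M) / 2 := by
      rw [integral_div, integral_const_mul,
        integral_add Measure.integrable_toReal_rnDeriv Measure.integrable_toReal_rnDeriv]
    rw [h3, hIp]
    nlinarith
  -- conclude in EReal
  rw [jsDiv, klDiv, klDiv, if_pos ⟨hPM, hllrP⟩, if_pos ⟨hQM, hllrQ⟩]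
  rw [show (1/2 : EReal) = ((1/2 : ℝ) : EReal) from rfl, ← EReal.coe_mul, ← EReal.coe_mul,
    ← EReal.coe_add, EReal.coe_le_coe_iff]
  linarith

theorem jsDiv_mixture_conv_noise_le {d : ℕ} (L : ℕ) (hL : 1 ≤ L)
    (α : Fin L → ℝ) (hα : ∀ l, α l ∈ Set.Icc (0 : ℝ) 1) (hαsum : ∑ l, α l = 1)
    (μ : Fin L → Measure (Fin d → ℝ)) [∀ l, IsProbabilityMeasure (μ l)]
    (δ : ℝ) (hδ : δ ∈ Set.Icc (0 : ℝ) 1)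
    (g : Fin L → Measure (Fin d → ℝ)) [∀ l, IsProbabilityMeasure (g l)] :
    jsDiv (∑ l, ENNReal.ofReal (α l) • μ l)
        (∑ l, ENNReal.ofReal (α l) •
          Measure.conv (μ l)
            (ENNReal.ofReal (1 - δ) • Measure.dirac (0 : Fin d → ℝ)
              + ENNReal.ofReal δ • g l))
      ≤ (δ : EReal) := by
  obtain ⟨hδ0, hδ1⟩ := hδ
  have hconv : ∀ l, Measure.conv (μ l)
      (ENNReal.ofReal (1 - δ) • Measure.dirac (0 : Fin d → ℝ) + ENNReal.ofReal δ • g l)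
      = ENNReal.ofReal (1 - δ) • μ l + ENNReal.ofReal δ • Measure.conv (μ l) (g l) := by
    intro l
    rw [Measure.conv_add, conv_smul_right' _ _ ENNReal.ofReal_ne_top,
      conv_smul_right' _ _ ENNReal.ofReal_ne_top]
    simp
  have hsum : (∑ l, ENNReal.ofReal (α l) •
      Measure.conv (μ l)
        (ENNReal.ofReal (1 - δ) • Measure.dirac (0 : Fin d → ℝ) + ENNReal.ofReal δ • g l))
      = ENNReal.ofReal (1 - δ) • (∑ l, ENNReal.ofReal (α l) • μ l)
        + ENNReal.ofReal δ • (∑ l, ENNReal.ofReal (α l) • Measure.conv (μ l) (g l)) := by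
    rw [Finset.smul_sum, Finset.smul_sum, ← Finset.sum_add_distrib]
    refine Finset.sum_congr rfl fun l _ => ?_
    rw [hconv l, smul_add, smul_comm, smul_comm (ENNReal.ofReal δ)]
  have hprob : ∀ (ν : Fin L → Measure (Fin d → ℝ)), (∀ l, IsProbabilityMeasure (ν l)) →
      IsProbabilityMeasure (∑ l, ENNReal.ofReal (α l) • ν l) := by
    intro ν hν
    constructor
    rw [Measure.coe_finset_sum, Finset.sum_apply]
    simp only [Measure.smul_apply, smul_eq_mul, measure_univ, mul_one]
    rw [← ENNReal.ofReal_sum_of_nonneg (fun l _ => (hα l).1), hαsum, ENNReal.ofReal_one]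
  haveI hP : IsProbabilityMeasure (∑ l, ENNReal.ofReal (α l) • μ l) :=
    hprob μ inferInstance
  haveI hR : IsProbabilityMeasure (∑ l, ENNReal.ofReal (α l) • Measure.conv (μ l) (g l)) :=
    hprob (fun l => Measure.conv (μ l) (g l)) inferInstance
  rw [hsum]
  exact jsDiv_mix_le _ _ hδ0 hδ1
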